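/- (Robbins–Siegmund supermartingale convergence) Let {v_k}, {u_k}, {a_k}, {b_k} be sequences of nonnegative random variables on a probability space such that E[v_{k+1} | F_k] ≤ (1 + a_k) v_k − u_k + b_k for all k ≥ 0 almost surely, where F_k denotes the σ-algebra generated by v_0,…,v_k, u_0,…,u_k, a_0,…,a_k and b_0,…,b_k. Assume ∑_{k=0}^∞ a_k < ∞ and ∑_{k=0}^∞ b_k < ∞ almost surely. Then {v_k} converges almost surely to some nonnegative random variable v, and ∑_{k=0}^∞ u_k < ∞ almost surely. -/

import Mathlib

open MeasureTheory Filter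

section RSaux

variable {Ω : Type*} (a b : ℕ → Ω → ℝ) (c : ℝ)

/-- indicator that partial sums of `a+b` up to `k` are `≤ c`. -/
noncomputable def rsChi (k : ℕ) (ω : Ω) : ℝ :=
  if ∑ j ∈ Finset.range (k + 1), (a j ω + b j ω) ≤ c then 1 else 0

/-- shifted indicator: `rsChi` at `k-1`, and `1` at `k = 0`. -/
noncomputable def rsChi' (k : ℕ) (ω : Ω) : ℝ :=
  if k = 0 then 1 else rsChi a b c (k - 1) ω

/-- product of `1 + χ_j a_j` over `j < k`. -/
noncomputable def rsAlpha (k : ℕ) (ω : Ω) : ℝ :=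
  ∏ j ∈ Finset.range k, (1 + rsChi a b c j ω * a j ω)

variable (v u : ℕ → Ω → ℝ)

/-- the truncated Robbins–Siegmund supermartingale. -/
noncomputable def rsW (k : ℕ) (ω : Ω) : ℝ :=
  (rsAlpha a b c k ω)⁻¹ * rsChi' a b c k ω * v k ω +
    ∑ j ∈ Finset.range k, (rsAlpha a b c (j + 1) ω)⁻¹ *
      (rsChi a b c j ω * u j ω - rsChi a b c j ω * b j ω)

variable {a b c}

@[simp] lemma rsChi'_zero (ω : Ω) : rsChi' a b c 0 ω = 1 := rfl

@[simp] lemma rsChi'_succ (k : ℕ) (ω : Ω) : rsChi' a b c (k + 1) ω = rsChi a b c k ω := by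
  simp [rsChi']

lemma rsChi_nonneg (k : ℕ) (ω : Ω) : 0 ≤ rsChi a b c k ω := by
  unfold rsChi; split <;> norm_num

lemma rsChi_le_one (k : ℕ) (ω : Ω) : rsChi a b c k ω ≤ 1 := by
  unfold rsChi; split <;> norm_num

lemma rsChi'_nonneg (k : ℕ) (ω : Ω) : 0 ≤ rsChi' a b c k ω := by
  unfold rsChi'; split; · norm_num
  · exact rsChi_nonneg _ _

lemma rsChi'_le_one (k : ℕ) (ω : Ω) : rsChi' a b c k ω ≤ 1 := by
  unfold rsChi'; split; · norm_num
  · exact rsChi_le_one _ _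

variable (ha0 : ∀ k ω, 0 ≤ a k ω) (hb0 : ∀ k ω, 0 ≤ b k ω)

include ha0 hb0 in
/-- if `χ_k = 1` then `χ'_k = 1`. -/
lemma rsChi'_eq_one {k : ℕ} {ω : Ω} (h : rsChi a b c k ω = 1) : rsChi' a b c k ω = 1 := by
  unfold rsChi' ; split
  · rfl
  · unfold rsChi at h ⊢
    split
    · rfl
    · exfalso
      rename_i hk h2
      rw [if_neg] at h
      · norm_num at h
      · intro hle
        exact h2 <| le_trans (Finset.sum_le_sum_of_subset_of_nonneg
          (Finset.range_subset_range.2 (by omega))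
          (fun i _ _ => add_nonneg (ha0 i ω) (hb0 i ω))) hle

include ha0 hb0 in
lemma rsSum_le (hc : 0 ≤ c) (k : ℕ) (ω : Ω) :
    ∑ j ∈ Finset.range k, rsChi a b c j ω * (a j ω + b j ω) ≤ c := by
  induction k with
  | zero => simpa using hc
  | succ k ih =>
    rw [Finset.sum_range_succ]
    by_cases h : ∑ j ∈ Finset.range (k + 1), (a j ω + b j ω) ≤ c
    · calc ∑ j ∈ Finset.range k, rsChi a b c j ω * (a j ω + b j ω)
            + rsChi a b c k ω * (a k ω + b k ω)
          ≤ ∑ j ∈ Finset.range k, (a j ω + b j ω) + 1 * (a k ω + b k ω) := by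
            have h1 : ∀ j ∈ Finset.range k, rsChi a b c j ω * (a j ω + b j ω) ≤ a j ω + b j ω :=
              fun j _ => mul_le_of_le_one_left (add_nonneg (ha0 _ _) (hb0 _ _)) (rsChi_le_one _ _)
            have h2 : rsChi a b c k ω * (a k ω + b k ω) ≤ 1 * (a k ω + b k ω) :=
              mul_le_mul_of_nonneg_right (rsChi_le_one _ _) (add_nonneg (ha0 _ _) (hb0 _ _))
            exact add_le_add (Finset.sum_le_sum h1) h2
        _ = ∑ j ∈ Finset.range (k + 1), (a j ω + b j ω) := by rw [Finset.sum_range_succ]; ring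
        _ ≤ c := h
    · have : rsChi a b c k ω = 0 := by unfold rsChi; exact if_neg h
      rw [this]; simpa using ih

include ha0 hb0 in
lemma rsSum_a_le (hc : 0 ≤ c) (k : ℕ) (ω : Ω) :
    ∑ j ∈ Finset.range k, rsChi a b c j ω * a j ω ≤ c := by
  refine le_trans ?_ (rsSum_le ha0 hb0 hc k ω)
  apply Finset.sum_le_sum
  intro j _
  have := rsChi_nonneg (a := a) (b := b) (c := c) j ω
  nlinarith [hb0 j ω]

include ha0 hb0 in
lemma rsSum_b_le (hc : 0 ≤ c) (k : ℕ) (ω : Ω) :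
    ∑ j ∈ Finset.range k, rsChi a b c j ω * b j ω ≤ c := by
  refine le_trans ?_ (rsSum_le ha0 hb0 hc k ω)
  apply Finset.sum_le_sum
  intro j _
  have := rsChi_nonneg (a := a) (b := b) (c := c) j ω
  nlinarith [ha0 j ω]

include ha0 in
lemma rsAlpha_one_le (k : ℕ) (ω : Ω) : 1 ≤ rsAlpha a b c k ω := by
  unfold rsAlpha
  induction k with
  | zero => simp
  | succ k ih =>
    rw [Finset.prod_range_succ]
    have h1 : (0:ℝ) ≤ rsChi a b c k ω * a k ω :=
      mul_nonneg (rsChi_nonneg _ _) (ha0 k ω)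
    nlinarith

include ha0 in
lemma rsAlpha_pos (k : ℕ) (ω : Ω) : 0 < rsAlpha a b c k ω :=
  lt_of_lt_of_le one_pos (rsAlpha_one_le ha0 k ω)

lemma rsAlpha_succ (k : ℕ) (ω : Ω) :
    rsAlpha a b c (k + 1) ω = rsAlpha a b c k ω * (1 + rsChi a b c k ω * a k ω) :=
  Finset.prod_range_succ _ _

include ha0 hb0 in
lemma rsAlpha_le (hc : 0 ≤ c) (k : ℕ) (ω : Ω) : rsAlpha a b c k ω ≤ Real.exp c := by
  have h1 : rsAlpha a b c k ω ≤ Real.exp (∑ j ∈ Finset.range k, rsChi a b c j ω * a j ω) := by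
    rw [Real.exp_sum]
    apply Finset.prod_le_prod
    · intro j _; nlinarith [rsChi_nonneg (a := a) (b := b) (c := c) j ω, ha0 j ω]
    · intro j _
      have := Real.add_one_le_exp (rsChi a b c j ω * a j ω)
      linarith
  exact h1.trans (Real.exp_le_exp.2 (rsSum_a_le ha0 hb0 hc k ω))

end RSaux

section RSaux2

variable {Ω : Type*} {a b : ℕ → Ω → ℝ} {c : ℝ} {v u : ℕ → Ω → ℝ}

lemma rsChi_eq_or (k : ℕ) (ω : Ω) : rsChi a b c k ω = 0 ∨ rsChi a b c k ω = 1 := by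
  unfold rsChi; split
  · exact Or.inr rfl
  · exact Or.inl rfl

variable (ha0 : ∀ k ω, 0 ≤ a k ω) (hb0 : ∀ k ω, 0 ≤ b k ω)
  (hv0 : ∀ k ω, 0 ≤ v k ω) (hu0 : ∀ k ω, 0 ≤ u k ω)

include ha0 in
lemma rsAlpha_mono (ω : Ω) : Monotone (fun k => rsAlpha a b c k ω) := by
  apply monotone_nat_of_le_succ
  intro k
  rw [rsAlpha_succ]
  have h1 : (0:ℝ) ≤ rsChi a b c k ω * a k ω := mul_nonneg (rsChi_nonneg _ _) (ha0 k ω)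
  nlinarith [rsAlpha_pos (a := a) (b := b) (c := c) ha0 k ω]

include ha0 hb0 hv0 hu0 in
/-- The key pointwise supermartingale step inequality. -/
lemma rsStep (k : ℕ) (ω : Ω) :
    (rsAlpha a b c (k + 1) ω)⁻¹ * rsChi a b c k ω *
        ((1 + a k ω) * v k ω - u k ω + b k ω) +
      ∑ j ∈ Finset.range (k + 1), (rsAlpha a b c (j + 1) ω)⁻¹ *
        (rsChi a b c j ω * u j ω - rsChi a b c j ω * b j ω) ≤
    rsW a b c v u k ω := by
  rw [rsW, Finset.sum_range_succ]
  have key : (rsAlpha a b c (k + 1) ω)⁻¹ * rsChi a b c k ω *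
        ((1 + a k ω) * v k ω - u k ω + b k ω) +
      (rsAlpha a b c (k + 1) ω)⁻¹ *
        (rsChi a b c k ω * u k ω - rsChi a b c k ω * b k ω) ≤
      (rsAlpha a b c k ω)⁻¹ * rsChi' a b c k ω * v k ω := by
    have halg : (rsAlpha a b c (k + 1) ω)⁻¹ * rsChi a b c k ω *
          ((1 + a k ω) * v k ω - u k ω + b k ω) +
        (rsAlpha a b c (k + 1) ω)⁻¹ *
          (rsChi a b c k ω * u k ω - rsChi a b c k ω * b k ω)
        = (rsAlpha a b c (k + 1) ω)⁻¹ * (rsChi a b c k ω * ((1 + a k ω) * v k ω)) := by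
      ring
    rw [halg]
    rcases rsChi_eq_or (a := a) (b := b) (c := c) k ω with h | h
    · rw [h]
      have h1 : (0:ℝ) ≤ (rsAlpha a b c k ω)⁻¹ :=
        inv_nonneg.2 (rsAlpha_pos ha0 k ω).le
      have h2 := rsChi'_nonneg (a := a) (b := b) (c := c) k ω
      have h3 := hv0 k ω
      simp only [zero_mul, mul_zero]
      exact mul_nonneg (mul_nonneg h1 h2) h3
    · rw [rsChi'_eq_one ha0 hb0 h, rsAlpha_succ, h]
      have h1 : (0:ℝ) < 1 + a k ω := by linarith [ha0 k ω]
      have h2 := rsAlpha_pos (a := a) (b := b) (c := c) ha0 k ω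
      apply le_of_eq
      field_simp
  linarith

include ha0 hb0 hv0 hu0 in
lemma rsW_lb (hc : 0 ≤ c) (k : ℕ) (ω : Ω) : -c ≤ rsW a b c v u k ω := by
  rw [rsW]
  have h1 : (0:ℝ) ≤ (rsAlpha a b c k ω)⁻¹ * rsChi' a b c k ω * v k ω :=
    mul_nonneg (mul_nonneg (inv_nonneg.2 (rsAlpha_pos ha0 k ω).le) (rsChi'_nonneg _ _)) (hv0 k ω)
  have h2 : -∑ j ∈ Finset.range k, rsChi a b c j ω * b j ω ≤
      ∑ j ∈ Finset.range k, (rsAlpha a b c (j + 1) ω)⁻¹ *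
        (rsChi a b c j ω * u j ω - rsChi a b c j ω * b j ω) := by
    rw [← Finset.sum_neg_distrib]
    apply Finset.sum_le_sum
    intro j _
    have hβ0 : (0:ℝ) ≤ (rsAlpha a b c (j + 1) ω)⁻¹ :=
      inv_nonneg.2 (rsAlpha_pos ha0 (j + 1) ω).le
    have hβ1 : (rsAlpha a b c (j + 1) ω)⁻¹ ≤ 1 := by
      rw [inv_le_one_iff₀]
      exact Or.inr (rsAlpha_one_le ha0 (j + 1) ω)
    have hub : (0:ℝ) ≤ rsChi a b c j ω * u j ω :=
      mul_nonneg (rsChi_nonneg _ _) (hu0 j ω)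
    have hbb : (0:ℝ) ≤ rsChi a b c j ω * b j ω :=
      mul_nonneg (rsChi_nonneg _ _) (hb0 j ω)
    nlinarith
  have h3 := rsSum_b_le ha0 hb0 hc k ω
  linarith

include ha0 hb0 in
lemma rsW_eq_of_chi_one {ω : Ω} (h1 : ∀ k, rsChi a b c k ω = 1) (k : ℕ) :
    rsW a b c v u k ω = (rsAlpha a b c k ω)⁻¹ * v k ω +
      (∑ j ∈ Finset.range k, (rsAlpha a b c (j + 1) ω)⁻¹ * u j ω -
        ∑ j ∈ Finset.range k, (rsAlpha a b c (j + 1) ω)⁻¹ * b j ω) := by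
  rw [rsW, ← Finset.sum_sub_distrib]
  congr 1
  · rw [rsChi'_eq_one ha0 hb0 (h1 k)]; ring
  · apply Finset.sum_congr rfl
    intro j _
    rw [h1 j]
    ring

end RSaux2

section RSaux3

variable {Ω : Type*} {a b : ℕ → Ω → ℝ} {v u : ℕ → Ω → ℝ}

/-- Deterministic extraction: from convergence of all truncated processes plus summability
of `a` and `b` at a point `ω`, deduce convergence of `v` and summability of `u`. -/
lemma rsExtract (ha0 : ∀ k ω, 0 ≤ a k ω) (hb0 : ∀ k ω, 0 ≤ b k ω)
    (hv0 : ∀ k ω, 0 ≤ v k ω) (hu0 : ∀ k ω, 0 ≤ u k ω) {ω : Ω}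
    (ha : Summable fun k => a k ω) (hb : Summable fun k => b k ω)
    (hW : ∀ n : ℕ, ∃ l, Tendsto (fun k => rsW a b (n : ℝ) v u k ω) atTop (nhds l)) :
    (∃ l, 0 ≤ l ∧ Tendsto (fun k => v k ω) atTop (nhds l)) ∧ Summable fun k => u k ω := by
  classical
  have hsab : Summable fun j => a j ω + b j ω := ha.add hb
  set T : ℝ := ∑' j, (a j ω + b j ω) with hTdef
  set n : ℕ := ⌈T⌉₊ with hndef
  have hS : ∀ k, ∑ j ∈ Finset.range (k + 1), (a j ω + b j ω) ≤ (n : ℝ) := by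
    intro k
    refine le_trans (Summable.sum_le_tsum _ (fun j _ => add_nonneg (ha0 j ω) (hb0 j ω)) hsab) ?_
    exact le_trans (le_of_eq hTdef.symm) (Nat.le_ceil T) |>.trans le_rfl
  have hχ1 : ∀ k, rsChi a b (n : ℝ) k ω = 1 := by
    intro k
    simp only [rsChi]
    rw [if_pos (hS k)]
  have hn0 : (0:ℝ) ≤ (n : ℝ) := Nat.cast_nonneg n
  -- the product process
  have hαpos : ∀ k, 0 < rsAlpha a b (n : ℝ) k ω := fun k => rsAlpha_pos ha0 k ω
  have hαle : ∀ k, rsAlpha a b (n : ℝ) k ω ≤ Real.exp n := fun k => rsAlpha_le ha0 hb0 hn0 k ω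
  have hα1 : ∀ k, 1 ≤ rsAlpha a b (n : ℝ) k ω := fun k => rsAlpha_one_le ha0 k ω
  have hαbdd : BddAbove (Set.range fun k => rsAlpha a b (n : ℝ) k ω) := by
    refine ⟨Real.exp n, ?_⟩
    rintro x ⟨k, rfl⟩
    exact hαle k
  set L : ℝ := ⨆ k, rsAlpha a b (n : ℝ) k ω with hLdef
  have hαtend : Tendsto (fun k => rsAlpha a b (n : ℝ) k ω) atTop (nhds L) :=
    tendsto_atTop_ciSup (rsAlpha_mono ha0 ω) hαbdd
  have hL1 : 1 ≤ L := le_trans (hα1 0) (le_ciSup hαbdd 0)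
  have hLne : L ≠ 0 := by positivity
  have hβtend : Tendsto (fun k => (rsAlpha a b (n : ℝ) k ω)⁻¹) atTop (nhds L⁻¹) :=
    hαtend.inv₀ hLne
  have hβ0 : ∀ k, (0:ℝ) ≤ (rsAlpha a b (n : ℝ) k ω)⁻¹ := fun k => (inv_nonneg).2 (hαpos k).le
  have hβ1 : ∀ k, (rsAlpha a b (n : ℝ) k ω)⁻¹ ≤ 1 := fun k =>
    inv_le_one_iff₀.2 (Or.inr (hα1 k))
  -- summability of the b-part
  have hQsum : Summable fun j => (rsAlpha a b (n : ℝ) (j + 1) ω)⁻¹ * b j ω := by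
    refine Summable.of_nonneg_of_le (fun j => mul_nonneg (hβ0 _) (hb0 j ω))
      (fun j => mul_le_of_le_one_left (hb0 j ω) (hβ1 _)) hb
  have hQtend : Tendsto (fun k => ∑ j ∈ Finset.range k,
      (rsAlpha a b (n : ℝ) (j + 1) ω)⁻¹ * b j ω) atTop
      (nhds (∑' j, (rsAlpha a b (n : ℝ) (j + 1) ω)⁻¹ * b j ω)) :=
    hQsum.hasSum.tendsto_sum_nat
  obtain ⟨l, hl⟩ := hW n
  have hWeq : ∀ k, rsW a b (n : ℝ) v u k ω =
      (rsAlpha a b (n : ℝ) k ω)⁻¹ * v k ω +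
        (∑ j ∈ Finset.range k, (rsAlpha a b (n : ℝ) (j + 1) ω)⁻¹ * u j ω -
          ∑ j ∈ Finset.range k, (rsAlpha a b (n : ℝ) (j + 1) ω)⁻¹ * b j ω) :=
    rsW_eq_of_chi_one ha0 hb0 hχ1
  -- bound the partial sums of the u-part
  obtain ⟨M, hM⟩ := (hl.add hQtend).bddAbove_range
  have hPsum : Summable fun j => (rsAlpha a b (n : ℝ) (j + 1) ω)⁻¹ * u j ω := by
    refine summable_of_sum_range_le (c := M) (fun j => mul_nonneg (hβ0 _) (hu0 j ω)) (fun k => ?_)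
    have h1 : rsW a b (n : ℝ) v u k ω + ∑ j ∈ Finset.range k,
        (rsAlpha a b (n : ℝ) (j + 1) ω)⁻¹ * b j ω ≤ M :=
      hM ⟨k, rfl⟩
    have h2 : (0:ℝ) ≤ (rsAlpha a b (n : ℝ) k ω)⁻¹ * v k ω :=
      mul_nonneg (hβ0 _) (hv0 k ω)
    have h3 := hWeq k
    linarith
  have hUsum : Summable fun j => u j ω := by
    refine Summable.of_nonneg_of_le (fun j => hu0 j ω) (fun j => ?_)
      (hPsum.mul_left (Real.exp n))
    have hx : (0:ℝ) ≤ (rsAlpha a b (n : ℝ) (j + 1) ω)⁻¹ * u j ω :=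
      mul_nonneg (hβ0 _) (hu0 j ω)
    calc u j ω = rsAlpha a b (n : ℝ) (j + 1) ω *
          ((rsAlpha a b (n : ℝ) (j + 1) ω)⁻¹ * u j ω) :=
        (mul_inv_cancel_left₀ (hαpos (j + 1)).ne' _).symm
      _ ≤ Real.exp n * ((rsAlpha a b (n : ℝ) (j + 1) ω)⁻¹ * u j ω) :=
        mul_le_mul_of_nonneg_right (hαle _) hx
  have hPtend := hPsum.hasSum.tendsto_sum_nat
  -- convergence of `β k * v k`
  have hβv : Tendsto (fun k => (rsAlpha a b (n : ℝ) k ω)⁻¹ * v k ω) atTop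
      (nhds (l - ((∑' j, (rsAlpha a b (n : ℝ) (j + 1) ω)⁻¹ * u j ω) -
        (∑' j, (rsAlpha a b (n : ℝ) (j + 1) ω)⁻¹ * b j ω)))) := by
    have hfeq : (fun k => (rsAlpha a b (n : ℝ) k ω)⁻¹ * v k ω) =
        fun k => rsW a b (n : ℝ) v u k ω -
          (∑ j ∈ Finset.range k, (rsAlpha a b (n : ℝ) (j + 1) ω)⁻¹ * u j ω -
            ∑ j ∈ Finset.range k, (rsAlpha a b (n : ℝ) (j + 1) ω)⁻¹ * b j ω) := by
      funext k
      rw [hWeq k]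
      ring
    rw [hfeq]
    exact hl.sub (hPtend.sub hQtend)
  have hvtend : Tendsto (fun k => v k ω) atTop (nhds (L *
      (l - ((∑' j, (rsAlpha a b (n : ℝ) (j + 1) ω)⁻¹ * u j ω) -
        (∑' j, (rsAlpha a b (n : ℝ) (j + 1) ω)⁻¹ * b j ω))))) := by
    have h := hαtend.mul hβv
    have hfeq : (fun k => rsAlpha a b (n : ℝ) k ω *
        ((rsAlpha a b (n : ℝ) k ω)⁻¹ * v k ω)) = fun k => v k ω := by
      funext k
      exact mul_inv_cancel_left₀ (hαpos k).ne' _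
    rwa [hfeq] at h
  exact ⟨⟨_, ge_of_tendsto' hvtend (fun k => hv0 k ω), hvtend⟩, hUsum⟩

end RSaux3

open scoped ENNReal NNReal

section RScore

open MeasurableSpace

/-- Almost-sure convergence of the truncated Robbins–Siegmund process. -/
lemma rsW_conv {Ω : Type*} [m0 : MeasurableSpace Ω] (μ : Measure Ω) [IsProbabilityMeasure μ]
    (v u a b : ℕ → Ω → ℝ)
    (hvm : ∀ k, Measurable (v k)) (hum : ∀ k, Measurable (u k))
    (ham : ∀ k, Measurable (a k)) (hbm : ∀ k, Measurable (b k))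
    (hvi : ∀ k, Integrable (v k) μ)
    (hv0 : ∀ k ω, 0 ≤ v k ω) (hu0 : ∀ k ω, 0 ≤ u k ω)
    (ha0 : ∀ k ω, 0 ≤ a k ω) (hb0 : ∀ k ω, 0 ≤ b k ω)
    (F : ℕ → MeasurableSpace Ω)
    (hF : ∀ k, F k = ⨆ j ∈ Finset.range (k + 1),
      (MeasurableSpace.comap (v j) inferInstance ⊔ MeasurableSpace.comap (u j) inferInstance ⊔
        MeasurableSpace.comap (a j) inferInstance ⊔ MeasurableSpace.comap (b j) inferInstance))
    (hcond : ∀ k, ∀ᵐ ω ∂μ,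
      (μ[v (k + 1) | F k]) ω ≤ (1 + a k ω) * v k ω - u k ω + b k ω)
    (n : ℕ) :
    ∀ᵐ ω ∂μ, ∃ l, Tendsto (fun k => rsW a b (n : ℝ) v u k ω) atTop (nhds l) := by
  classical
  set c : ℝ := (n : ℝ) with hcdef
  have hc : (0:ℝ) ≤ c := Nat.cast_nonneg n
  -- the filtration
  have hFle : ∀ k, F k ≤ m0 := by
    intro k; rw [hF k]
    refine iSup_le fun j => iSup_le fun _ => ?_
    refine sup_le (sup_le (sup_le ?_ ?_) ?_) ?_
    exacts [measurable_iff_comap_le.1 (hvm j), measurable_iff_comap_le.1 (hum j),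
      measurable_iff_comap_le.1 (ham j), measurable_iff_comap_le.1 (hbm j)]
  have hmono : Monotone F := by
    intro i j hij
    rw [hF i, hF j]
    exact biSup_mono fun k hk =>
      Finset.mem_range.2 (lt_of_lt_of_le (Finset.mem_range.1 hk) (by omega))
  set ℱ : Filtration ℕ m0 := ⟨F, hmono, hFle⟩ with hℱ
  -- basic measurability with respect to the filtration
  have hsup : ∀ j k, j ≤ k →
      (MeasurableSpace.comap (v j) inferInstance ⊔ MeasurableSpace.comap (u j) inferInstance ⊔
        MeasurableSpace.comap (a j) inferInstance ⊔ MeasurableSpace.comap (b j) inferInstance)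
        ≤ F k := by
    intro j k hjk
    rw [hF k]
    exact le_iSup₂ (f := fun i (_ : i ∈ Finset.range (k + 1)) =>
      MeasurableSpace.comap (v i) inferInstance ⊔ MeasurableSpace.comap (u i) inferInstance ⊔
        MeasurableSpace.comap (a i) inferInstance ⊔ MeasurableSpace.comap (b i) inferInstance)
      j (Finset.mem_range.2 (Nat.lt_succ_of_le hjk))
  have hvF : ∀ j k, j ≤ k → Measurable[F k] (v j) := fun j k hjk =>
    measurable_iff_comap_le.2 <|
      le_trans (le_sup_of_le_left (le_sup_of_le_left le_sup_left)) (hsup j k hjk)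
  have huF : ∀ j k, j ≤ k → Measurable[F k] (u j) := fun j k hjk =>
    measurable_iff_comap_le.2 <|
      le_trans (le_sup_of_le_left (le_sup_of_le_left le_sup_right)) (hsup j k hjk)
  have haF : ∀ j k, j ≤ k → Measurable[F k] (a j) := fun j k hjk =>
    measurable_iff_comap_le.2 <|
      le_trans (le_sup_of_le_left le_sup_right) (hsup j k hjk)
  have hbF : ∀ j k, j ≤ k → Measurable[F k] (b j) := fun j k hjk =>
    measurable_iff_comap_le.2 <| le_trans le_sup_right (hsup j k hjk)
  have hχF : ∀ j k, j ≤ k → Measurable[F k] (rsChi a b c j) := by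
    intro j k hjk
    unfold rsChi
    refine Measurable.ite (measurableSet_le (Finset.measurable_sum _ fun i hi => ?_)
      measurable_const) measurable_const measurable_const
    have hik : i ≤ k := by
      have := Finset.mem_range.1 hi; omega
    exact ((haF i k hik).add (hbF i k hik))
  have hχ'F : ∀ k, Measurable[F k] (rsChi' a b c k) := by
    intro k
    cases k with
    | zero => exact measurable_const
    | succ k =>
      have : rsChi' a b c (k + 1) = rsChi a b c k := funext fun ω => rsChi'_succ k ω
      rw [this]
      exact hχF k (k + 1) (by omega)
  have hαF : ∀ j k, j ≤ k + 1 → Measurable[F k] (rsAlpha a b c j) := by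
    intro j k hjk
    unfold rsAlpha
    refine Finset.measurable_prod _ fun i hi => ?_
    have hik : i ≤ k := by
      have := Finset.mem_range.1 hi; omega
    exact measurable_const.add ((hχF i k hik).mul (haF i k hik))
  have hWF : ∀ k, Measurable[F k] (rsW a b c v u k) := by
    intro k
    unfold rsW
    refine Measurable.add ?_ (Finset.measurable_sum _ fun j hj => ?_)
    · exact (((hαF k k (by omega)).inv.mul (hχ'F k)).mul (hvF k k le_rfl))
    · have hjk : j ≤ k := by have := Finset.mem_range.1 hj; omega
      have hjk1 : j + 1 ≤ k + 1 := by omega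
      exact ((hαF (j+1) k (by omega)).inv.mul
        (((hχF j k hjk).mul (huF j k hjk)).sub ((hχF j k hjk).mul (hbF j k hjk))))
  -- pointwise bounds
  have hβ0 : ∀ k ω, (0:ℝ) ≤ (rsAlpha a b c k ω)⁻¹ :=
    fun k ω => inv_nonneg.2 (rsAlpha_pos ha0 k ω).le
  have hβ1 : ∀ k ω, (rsAlpha a b c k ω)⁻¹ ≤ 1 :=
    fun k ω => inv_le_one_iff₀.2 (Or.inr (rsAlpha_one_le ha0 k ω))
  -- integrability of the pieces
  have hYint : ∀ k, Integrable (fun ω => (rsAlpha a b c k ω)⁻¹ * rsChi' a b c k ω * v k ω) μ := by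
    intro k
    refine (hvi k).mono
      ((((hαF k k (by omega)).inv.mul (hχ'F k)).mul (hvF k k le_rfl)).mono (hFle k)
        le_rfl).aestronglyMeasurable (ae_of_all _ fun ω => ?_)
    rw [Real.norm_eq_abs, Real.norm_eq_abs,
      abs_of_nonneg (mul_nonneg (mul_nonneg (hβ0 k ω) (rsChi'_nonneg k ω)) (hv0 k ω)),
      abs_of_nonneg (hv0 k ω)]
    exact mul_le_of_le_one_left (hv0 k ω)
      (mul_le_one₀ (hβ1 k ω) (rsChi'_nonneg k ω) (rsChi'_le_one k ω))
  have hχab : ∀ k ω, rsChi a b c k ω = 1 → a k ω ≤ c ∧ b k ω ≤ c := by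
    intro k ω h
    have hSle : ∑ j ∈ Finset.range (k + 1), (a j ω + b j ω) ≤ c := by
      by_contra hcon
      unfold rsChi at h
      rw [if_neg hcon] at h
      norm_num at h
    have hle : a k ω + b k ω ≤ ∑ j ∈ Finset.range (k + 1), (a j ω + b j ω) :=
      Finset.single_le_sum (f := fun j => a j ω + b j ω)
        (fun j _ => add_nonneg (ha0 j ω) (hb0 j ω)) (Finset.self_mem_range_succ k)
    constructor
    · nlinarith [hb0 k ω]
    · nlinarith [ha0 k ω]
  have hUint : ∀ k, Integrable (fun ω => rsChi a b c k ω * u k ω) μ := by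
    intro k
    have hdom : Integrable (fun ω => (1 + c) * v k ω + c) μ :=
      ((hvi k).const_mul (1 + c)).add (integrable_const c)
    refine hdom.mono
      (((hχF k k le_rfl).mul (huF k k le_rfl)).mono (hFle k) le_rfl).aestronglyMeasurable ?_
    have h0 : (0:Ω → ℝ) ≤ᵐ[μ] μ[v (k + 1) | F k] :=
      condExp_nonneg (ae_of_all _ fun ω => hv0 (k + 1) ω)
    filter_upwards [hcond k, h0] with ω h1 h2
    have hdom0 : (0:ℝ) ≤ (1 + c) * v k ω + c := by nlinarith [hv0 k ω]
    rw [Real.norm_eq_abs, Real.norm_eq_abs,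
      abs_of_nonneg (mul_nonneg (rsChi_nonneg k ω) (hu0 k ω)), abs_of_nonneg hdom0]
    rcases rsChi_eq_or (a := a) (b := b) (c := c) k ω with h | h
    · rw [h, zero_mul]; exact hdom0
    · rw [h, one_mul]
      obtain ⟨hak, hbk⟩ := hχab k ω h
      have h2' : (0:ℝ) ≤ (μ[v (k + 1) | F k]) ω := h2
      nlinarith [hv0 k ω, mul_nonneg (sub_nonneg.2 hak) (hv0 k ω)]
  have hBint : ∀ k, Integrable (fun ω => rsChi a b c k ω * b k ω) μ := by
    intro k
    refine (integrable_const c).mono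
      (((hχF k k le_rfl).mul (hbF k k le_rfl)).mono (hFle k) le_rfl).aestronglyMeasurable
      (ae_of_all _ fun ω => ?_)
    rw [Real.norm_eq_abs, Real.norm_eq_abs,
      abs_of_nonneg (mul_nonneg (rsChi_nonneg k ω) (hb0 k ω)), abs_of_nonneg hc]
    rcases rsChi_eq_or (a := a) (b := b) (c := c) k ω with h | h
    · rw [h, zero_mul]; exact hc
    · rw [h, one_mul]; exact (hχab k ω h).2
  have hsumint : ∀ k, Integrable (fun ω => ∑ j ∈ Finset.range k,
      (rsAlpha a b c (j + 1) ω)⁻¹ *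
        (rsChi a b c j ω * u j ω - rsChi a b c j ω * b j ω)) μ := by
    intro k
    refine integrable_finset_sum _ fun j hj => ?_
    have hjk : j ≤ k - 1 ∨ True := Or.inr trivial
    refine Integrable.bdd_mul ((hUint j).sub (hBint j))
      (((hαF (j + 1) j le_rfl).inv.mono (hFle j) le_rfl)).aestronglyMeasurable (c := 1) (ae_of_all _ fun ω => ?_)
    rw [Real.norm_eq_abs, abs_of_nonneg (hβ0 _ ω)]
    exact hβ1 _ ω
  have hWint : ∀ k, Integrable (rsW a b c v u k) μ := by
    intro k
    unfold rsW
    exact (hYint k).add (hsumint k)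
  -- the supermartingale property
  have hadp : StronglyAdapted ℱ (rsW a b c v u) := fun k => (hWF k).stronglyMeasurable
  have hstep : ∀ k, μ[rsW a b c v u (k + 1) | F k] ≤ᵐ[μ] rsW a b c v u k := by
    intro k
    set g : Ω → ℝ := fun ω => (rsAlpha a b c (k + 1) ω)⁻¹ * rsChi a b c k ω with hgdef
    set h : Ω → ℝ := fun ω => ∑ j ∈ Finset.range (k + 1),
      (rsAlpha a b c (j + 1) ω)⁻¹ *
        (rsChi a b c j ω * u j ω - rsChi a b c j ω * b j ω) with hhdef
    have hWsucc : rsW a b c v u (k + 1) = g * v (k + 1) + h := by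
      funext ω
      simp only [rsW, Pi.add_apply, Pi.mul_apply, hgdef, hhdef]
      rw [rsChi'_succ]
    have hgmeas : StronglyMeasurable[F k] g :=
      ((hαF (k + 1) k le_rfl).inv.mul (hχF k k le_rfl)).stronglyMeasurable
    have hg0 : ∀ ω, 0 ≤ g ω := fun ω => mul_nonneg (hβ0 _ ω) (rsChi_nonneg k ω)
    have hg1 : ∀ ω, g ω ≤ 1 := fun ω =>
      mul_le_one₀ (hβ1 _ ω) (rsChi_nonneg k ω) (rsChi_le_one k ω)
    have hgvint : Integrable (g * v (k + 1)) μ := by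
      refine Integrable.bdd_mul (hvi (k + 1))
        (hgmeas.mono (hFle k)).aestronglyMeasurable (c := 1) (ae_of_all _ fun ω => ?_)
      rw [Real.norm_eq_abs, abs_of_nonneg (hg0 ω)]
      exact hg1 ω
    have hhint : Integrable h μ := hsumint (k + 1)
    have hhmeas : StronglyMeasurable[F k] h := by
      refine (Finset.measurable_sum _ fun j hj => ?_).stronglyMeasurable
      have hjk : j ≤ k := by have := Finset.mem_range.1 hj; omega
      exact (hαF (j + 1) k (by omega)).inv.mul
        (((hχF j k hjk).mul (huF j k hjk)).sub ((hχF j k hjk).mul (hbF j k hjk)))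
    have e1 : μ[rsW a b c v u (k + 1) | F k] =ᵐ[μ]
        μ[g * v (k + 1) | F k] + μ[h | F k] := by
      rw [hWsucc]
      exact condExp_add hgvint hhint (F k)
    have e2 : μ[g * v (k + 1) | F k] =ᵐ[μ] g * μ[v (k + 1) | F k] :=
      condExp_stronglyMeasurable_mul_of_bound (hFle k) hgmeas (hvi (k + 1)) 1
        (ae_of_all _ fun ω => by
          rw [Real.norm_eq_abs, abs_of_nonneg (hg0 ω)]; exact hg1 ω)
    have e3 : μ[h | F k] = h := condExp_of_stronglyMeasurable (hFle k) hhmeas hhint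
    filter_upwards [e1, e2, hcond k] with ω h1 h2 h3
    rw [h1]
    simp only [Pi.add_apply, Pi.mul_apply] at h2 ⊢
    rw [h2, e3]
    calc g ω * (μ[v (k + 1) | F k]) ω + h ω
        ≤ g ω * ((1 + a k ω) * v k ω - u k ω + b k ω) + h ω := by
          have := mul_le_mul_of_nonneg_left h3 (hg0 ω)
          linarith
      _ ≤ rsW a b c v u k ω := by
          have := rsStep ha0 hb0 hv0 hu0 (a := a) (b := b) (c := c) (v := v) (u := u) k ω
          simp only [hgdef, hhdef]
          rw [mul_assoc] at this ⊢
          convert this using 2 <;> ring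
  have hsuper : Supermartingale (rsW a b c v u) ℱ μ :=
    supermartingale_nat hadp hWint hstep
  -- L¹ boundedness
  have hWlb : ∀ k ω, -c ≤ rsW a b c v u k ω := fun k ω => rsW_lb ha0 hb0 hv0 hu0 hc k ω
  have hIle : ∀ k, ∫ ω, rsW a b c v u k ω ∂μ ≤ ∫ ω, rsW a b c v u 0 ω ∂μ := by
    intro k
    have h := hsuper.2.1 0 k (Nat.zero_le k)
    calc ∫ ω, rsW a b c v u k ω ∂μ
        = ∫ ω, (μ[rsW a b c v u k | F 0]) ω ∂μ := (integral_condExp (hFle 0)).symm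
      _ ≤ ∫ ω, rsW a b c v u 0 ω ∂μ := integral_mono_ae integrable_condExp (hWint 0) h
  set R : ℝ≥0 := ((∫ ω, rsW a b c v u 0 ω ∂μ) + 2 * c).toNNReal with hRdef
  have hbdd : ∀ k, eLpNorm (rsW a b c v u k) 1 μ ≤ (R : ℝ≥0∞) := by
    intro k
    have heq : eLpNorm (rsW a b c v u k) 1 μ =
        ENNReal.ofReal (∫ ω, ‖rsW a b c v u k ω‖ ∂μ) := by
      rw [eLpNorm_one_eq_lintegral_enorm, ofReal_integral_norm_eq_lintegral_enorm (hWint k)]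
    have hRcoe : (R : ℝ≥0∞) = ENNReal.ofReal ((∫ ω, rsW a b c v u 0 ω ∂μ) + 2 * c) := rfl
    rw [heq, hRcoe]
    apply ENNReal.ofReal_le_ofReal
    have hptw : ∀ ω, ‖rsW a b c v u k ω‖ ≤ rsW a b c v u k ω + 2 * c := by
      intro ω
      rw [Real.norm_eq_abs]
      have := hWlb k ω
      rcases abs_cases (rsW a b c v u k ω) with ⟨he, _⟩ | ⟨he, _⟩ <;> rw [he] <;> linarith
    calc ∫ ω, ‖rsW a b c v u k ω‖ ∂μ
        ≤ ∫ ω, (rsW a b c v u k ω + 2 * c) ∂μ :=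
          integral_mono (hWint k).norm ((hWint k).add (integrable_const _)) hptw
      _ = (∫ ω, rsW a b c v u k ω ∂μ) + 2 * c := by
          rw [integral_add (hWint k) (integrable_const _), integral_const]
          simp
      _ ≤ (∫ ω, rsW a b c v u 0 ω ∂μ) + 2 * c := by linarith [hIle k]
  -- convergence of the submartingale `-W`
  have hsub : Submartingale (-rsW a b c v u) ℱ μ := hsuper.neg
  have hconv := hsub.exists_ae_tendsto_of_bdd (R := R) (fun k => by
    have : (-rsW a b c v u) k = -(rsW a b c v u k) := rfl
    rw [this, eLpNorm_neg]
    exact hbdd k)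
  filter_upwards [hconv] with ω hω
  obtain ⟨l, hl⟩ := hω
  refine ⟨-l, ?_⟩
  have : (fun k => rsW a b c v u k ω) = fun k => -((-rsW a b c v u) k ω) := by
    funext k; simp
  rw [this]
  exact hl.neg

end RScore

/-- **Robbins–Siegmund supermartingale convergence theorem.**
Let `v, u, a, b` be sequences of nonnegative (integrable) random variables with
`E[v (k+1) | F k] ≤ (1 + a k) v k − u k + b k` a.s. for all `k`, where `F k` is the
σ-algebra generated by `v 0, …, v k, u 0, …, u k, a 0, …, a k, b 0, …, b k`.
If `∑ a k < ∞` and `∑ b k < ∞` a.s., then `v k` converges a.s. to a nonnegative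
random variable and `∑ u k < ∞` a.s. -/
theorem robbins_siegmund
    {Ω : Type*} [m0 : MeasurableSpace Ω] (μ : Measure Ω) [IsProbabilityMeasure μ]
    (v u a b : ℕ → Ω → ℝ)
    (hvm : ∀ k, Measurable (v k)) (hum : ∀ k, Measurable (u k))
    (ham : ∀ k, Measurable (a k)) (hbm : ∀ k, Measurable (b k))
    (hvi : ∀ k, Integrable (v k) μ)
    (hv0 : ∀ k ω, 0 ≤ v k ω) (hu0 : ∀ k ω, 0 ≤ u k ω)
    (ha0 : ∀ k ω, 0 ≤ a k ω) (hb0 : ∀ k ω, 0 ≤ b k ω)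
    (F : ℕ → MeasurableSpace Ω)
    (hF : ∀ k, F k = ⨆ j ∈ Finset.range (k + 1),
      (MeasurableSpace.comap (v j) inferInstance ⊔ MeasurableSpace.comap (u j) inferInstance ⊔
        MeasurableSpace.comap (a j) inferInstance ⊔ MeasurableSpace.comap (b j) inferInstance))
    (hcond : ∀ k, ∀ᵐ ω ∂μ,
      (μ[v (k + 1) | F k]) ω ≤ (1 + a k ω) * v k ω - u k ω + b k ω)
    (hasum : ∀ᵐ ω ∂μ, Summable fun k => a k ω)
    (hbsum : ∀ᵐ ω ∂μ, Summable fun k => b k ω) :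
    (∃ vlim : Ω → ℝ, ∀ᵐ ω ∂μ, 0 ≤ vlim ω ∧
        Tendsto (fun k => v k ω) atTop (nhds (vlim ω))) ∧
      ∀ᵐ ω ∂μ, Summable fun k => u k ω := by
  classical
  have key : ∀ᵐ ω ∂μ, ∀ n : ℕ, ∃ l,
      Tendsto (fun k => rsW a b (n : ℝ) v u k ω) atTop (nhds l) :=
    ae_all_iff.2 fun n =>
      rsW_conv μ v u a b hvm hum ham hbm hvi hv0 hu0 ha0 hb0 F hF hcond n
  have main : ∀ᵐ ω ∂μ, (∃ l, 0 ≤ l ∧ Tendsto (fun k => v k ω) atTop (nhds l)) ∧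
      Summable fun k => u k ω := by
    filter_upwards [key, hasum, hbsum] with ω hW ha hb
    exact rsExtract ha0 hb0 hv0 hu0 ha hb hW
  refine ⟨⟨fun ω => if h : ∃ l, Tendsto (fun k => v k ω) atTop (nhds l)
      then h.choose else 0, ?_⟩, main.mono fun ω h => h.2⟩
  filter_upwards [main] with ω hω
  obtain ⟨⟨l, hl0, hlt⟩, -⟩ := hω
  have hex : ∃ l, Tendsto (fun k => v k ω) atTop (nhds l) := ⟨l, hlt⟩
  rw [dif_pos hex]
  have hchoose : hex.choose = l := tendsto_nhds_unique hex.choose_spec hlt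
  rw [hchoose]
  exact ⟨hl0, hlt⟩
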